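/- Let G, H, Ĝ, Ĥ ∈ ℝ^{N×N} be matrices such that G and Ĝ are invertible and H ≠ 0. Let ε > 0 and set τ_ε = 2‖G⁻¹‖‖H‖ + ε, where ‖·‖ denotes the operator norm of a matrix induced by the Euclidean norm. If ‖G⁻¹H − Ĝ⁻¹Ĥ‖ > ε, then at least one of the following holds: ‖H − Ĥ‖ > (ε/τ_ε) ‖H‖, or ‖G − Ĝ‖ > (ε/τ_ε) ‖G⁻¹‖⁻¹. -/
import Mathlib
open Matrix
noncomputable def opNorm {N : ℕ} (M : Matrix (Fin N) (Fin N) ℝ) : ℝ :=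
  ‖Matrix.toEuclideanCLM (𝕜 := ℝ) M‖

lemma opNorm_mul_le {N : ℕ} (A B : Matrix (Fin N) (Fin N) ℝ) :
    opNorm (A * B) ≤ opNorm A * opNorm B := by
  simp only [opNorm, _root_.map_mul]; exact norm_mul_le _ _

lemma opNorm_nonneg {N : ℕ} (A : Matrix (Fin N) (Fin N) ℝ) : 0 ≤ opNorm A := norm_nonneg _

lemma opNorm_pos {N : ℕ} {A : Matrix (Fin N) (Fin N) ℝ} (h : A ≠ 0) : 0 < opNorm A := by
  rw [opNorm, norm_pos_iff]
  simpa using h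

lemma opNorm_add_le {N : ℕ} (A B : Matrix (Fin N) (Fin N) ℝ) :
    opNorm (A + B) ≤ opNorm A + opNorm B := by
  simp only [opNorm, map_add]; exact norm_add_le _ _

lemma opNorm_sub_rev {N : ℕ} (A B : Matrix (Fin N) (Fin N) ℝ) :
    opNorm (A - B) = opNorm (B - A) := by
  simp only [opNorm, map_sub]; exact norm_sub_rev _ _

/-- Deterministic core of the perturbation bound (Lemma 4.4): if the products
`G⁻¹H` and `Ĝ⁻¹Ĥ` are far apart, then one of the factors must be perturbed. -/
theorem perturbation_bound_det
    {N : ℕ} (hN : 0 < N)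
    (G H Ghat Hhat : Matrix (Fin N) (Fin N) ℝ)
    (hG : IsUnit G) (hGhat : IsUnit Ghat) (hH : H ≠ 0)
    (ε : ℝ) (hε : 0 < ε)
    (τ : ℝ) (hτ : τ = 2 * opNorm G⁻¹ * opNorm H + ε)
    (hfar : ε < opNorm (G⁻¹ * H - Ghat⁻¹ * Hhat)) :
    (ε / τ) * opNorm H < opNorm (H - Hhat) ∨
    (ε / τ) * (opNorm G⁻¹)⁻¹ < opNorm (G - Ghat) := by
  by_contra hcon
  push_neg at hcon
  obtain ⟨hH', hG'⟩ := hcon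
  have hGdet : IsUnit G.det := (isUnit_iff_isUnit_det G).mp hG
  have hGhatdet : IsUnit Ghat.det := (isUnit_iff_isUnit_det Ghat).mp hGhat
  have h0 : G * G⁻¹ = 1 := mul_nonsing_inv G hGdet
  have h1 : G⁻¹ * G = 1 := nonsing_inv_mul G hGdet
  have h2 : Ghat * Ghat⁻¹ = 1 := mul_nonsing_inv Ghat hGhatdet
  set D := G⁻¹ * H - Ghat⁻¹ * Hhat with hD
  -- key matrix identity
  have hmain : G * D = (Ghat - G) * (G⁻¹ * H) + (H - Hhat) - (Ghat - G) * D := by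
    rw [hD]
    simp only [mul_sub, sub_mul, mul_add, add_mul, ← mul_assoc, h0, h2, one_mul]
    abel
  have key : D = G⁻¹ * ((Ghat - G) * (G⁻¹ * H) + (H - Hhat) - (Ghat - G) * D) := by
    rw [← hmain, ← mul_assoc, h1, one_mul]
  -- nontriviality
  have hGinv_ne : G⁻¹ ≠ 0 := by
    intro h
    have : (1 : Matrix (Fin N) (Fin N) ℝ) = 0 := by rw [← h1, h]; simp
    have := congrFun (congrFun this ⟨0, hN⟩) ⟨0, hN⟩
    simp [Matrix.one_apply] at this
  have ha : 0 < opNorm G⁻¹ := opNorm_pos hGinv_ne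
  have hh : 0 < opNorm H := opNorm_pos hH
  have hτpos : 0 < τ := by rw [hτ]; positivity
  have hτε : ε < τ := by rw [hτ]; nlinarith
  -- norm bounds
  set a := opNorm G⁻¹
  set h := opNorm H
  set d := opNorm D
  have hd : ε < d := hfar
  have hGG : opNorm (Ghat - G) ≤ (ε/τ) * a⁻¹ := by
    rw [opNorm_sub_rev]; exact hG'
  have b1 : opNorm ((Ghat - G) * (G⁻¹ * H)) ≤ (ε/τ) * a⁻¹ * (a * h) := by
    calc opNorm ((Ghat - G) * (G⁻¹ * H)) ≤ opNorm (Ghat - G) * opNorm (G⁻¹ * H) :=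
          opNorm_mul_le _ _
      _ ≤ (ε/τ) * a⁻¹ * (a * h) := by
          apply mul_le_mul hGG (opNorm_mul_le _ _) (opNorm_nonneg _)
          positivity
  have b2 : opNorm ((Ghat - G) * D) ≤ (ε/τ) * a⁻¹ * d := by
    calc opNorm ((Ghat - G) * D) ≤ opNorm (Ghat - G) * opNorm D := opNorm_mul_le _ _
      _ ≤ (ε/τ) * a⁻¹ * d := by
          apply mul_le_mul_of_nonneg_right hGG (opNorm_nonneg _)
  have btot : d ≤ a * ((ε/τ) * a⁻¹ * (a * h) + (ε/τ) * h + (ε/τ) * a⁻¹ * d) := by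
    calc d = opNorm D := rfl
      _ = opNorm (G⁻¹ * ((Ghat - G) * (G⁻¹ * H) + (H - Hhat) - (Ghat - G) * D)) := by
          rw [← key]
      _ ≤ a * opNorm ((Ghat - G) * (G⁻¹ * H) + (H - Hhat) - (Ghat - G) * D) :=
          opNorm_mul_le _ _
      _ ≤ a * ((ε/τ) * a⁻¹ * (a * h) + (ε/τ) * h + (ε/τ) * a⁻¹ * d) := by
          apply mul_le_mul_of_nonneg_left _ (le_of_lt ha)
          calc opNorm ((Ghat - G) * (G⁻¹ * H) + (H - Hhat) - (Ghat - G) * D)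
              ≤ opNorm ((Ghat - G) * (G⁻¹ * H) + (H - Hhat)) + opNorm ((Ghat - G) * D) := by
                rw [sub_eq_add_neg]
                refine (opNorm_add_le _ _).trans ?_
                gcongr
                simp only [opNorm, map_neg, norm_neg, le_refl]
            _ ≤ (opNorm ((Ghat - G) * (G⁻¹ * H)) + opNorm (H - Hhat)) + opNorm ((Ghat - G) * D) := by
                gcongr; exact opNorm_add_le _ _
            _ ≤ (ε/τ) * a⁻¹ * (a * h) + (ε/τ) * h + (ε/τ) * a⁻¹ * d := by
                gcongr
  -- arithmetic contradiction
  have ha' : a⁻¹ * a = 1 := inv_mul_cancel₀ (ne_of_gt ha)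
  have btot' : d ≤ (ε/τ) * (2 * a * h) + (ε/τ) * d := by
    calc d ≤ a * ((ε/τ) * a⁻¹ * (a * h) + (ε/τ) * h + (ε/τ) * a⁻¹ * d) := btot
      _ = (ε/τ) * (2 * a * h) + (ε/τ) * d := by
          field_simp
          ring
  have hτε' : 2 * a * h = τ - ε := by rw [hτ]; ring
  rw [hτε'] at btot'
  have : d * τ ≤ ε * (τ - ε) + ε * d := by
    have := mul_le_mul_of_nonneg_right btot' (le_of_lt hτpos)
    calc d * τ ≤ ((ε/τ) * (τ - ε) + (ε/τ) * d) * τ := this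
      _ = ε * (τ - ε) + ε * d := by field_simp
  nlinarith
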